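/- Suppose S* ⊆ {1,...,n} is a set of minimum cardinality such that rank(col{A − λI, I^{[n]\S*}, F}) > rank(col{A − λI, I^{[n]\S*}}). Then necessarily rank(col{A − λI, I^{[n]\S*}, F}) = n and rank(col{A − λI, I^{[n]\S*}}) = n − 1. -/

import Mathlib

/-- `I^{[n]\S}`: the identity matrix with the columns indexed by `S` zeroed out. -/
def blockedId (n : ℕ) (S : Finset (Fin n)) : Matrix (Fin n) (Fin n) ℂ :=
  Matrix.of fun i j => if j ∈ S then 0 else if i = j then 1 else 0

/-- `col{A - λI, I^{[n]\S}}`. -/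
def stackTwo (n : ℕ) (A : Matrix (Fin n) (Fin n) ℝ) (lam : ℂ) (S : Finset (Fin n)) :
    Matrix (Fin n ⊕ Fin n) (Fin n) ℂ :=
  Matrix.fromRows (A.map Complex.ofReal - lam • (1 : Matrix (Fin n) (Fin n) ℂ)) (blockedId n S)

/-- `col{A - λI, I^{[n]\S}, F}`. -/
def stackThree (n r : ℕ) (A : Matrix (Fin n) (Fin n) ℝ) (lam : ℂ)
    (F : Matrix (Fin r) (Fin n) ℝ) (S : Finset (Fin n)) :
    Matrix ((Fin n ⊕ Fin n) ⊕ Fin r) (Fin n) ℂ :=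
  Matrix.fromRows (stackTwo n A lam S) (F.map Complex.ofReal)

open Submodule Module

noncomputable def eSpan (n : ℕ) (S : Finset (Fin n)) : Submodule ℂ (Fin n → ℂ) :=
  span ℂ ((fun i => (Pi.single i 1 : Fin n → ℂ)) '' {i | i ∉ S})

lemma span_range_fromRows {m₁ m₂ n : Type*} (B : Matrix m₁ n ℂ) (C : Matrix m₂ n ℂ) :
    span ℂ (Set.range (Matrix.fromRows B C)) = span ℂ (Set.range B) ⊔ span ℂ (Set.range C) := by
  have h : Set.range (Matrix.fromRows B C) = Set.range B ∪ Set.range C := by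
    ext v
    constructor
    · rintro ⟨i | i, rfl⟩
      · exact Or.inl ⟨i, rfl⟩
      · exact Or.inr ⟨i, rfl⟩
    · rintro (⟨i, rfl⟩ | ⟨i, rfl⟩)
      · exact ⟨Sum.inl i, rfl⟩
      · exact ⟨Sum.inr i, rfl⟩
  rw [h, span_union]

lemma blockedId_row {n : ℕ} (S : Finset (Fin n)) (i : Fin n) :
    blockedId n S i = if i ∈ S then 0 else Pi.single i 1 := by
  ext j
  show (if j ∈ S then 0 else if i = j then 1 else 0)
      = (if i ∈ S then (0 : Fin n → ℂ) else Pi.single i 1) j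
  by_cases hi : i ∈ S
  · simp only [hi, if_true, Pi.zero_apply]
    by_cases hj : j ∈ S
    · simp [hj]
    · have hij : i ≠ j := fun h => hj (h ▸ hi)
      simp [hj, hij]
  · simp only [hi, if_false]
    by_cases hj : j ∈ S
    · have hij : j ≠ i := fun h => hi (h ▸ hj)
      simp [hj, Pi.single_apply, hij]
    · simp [hj, Pi.single_apply, eq_comm]

lemma span_range_blockedId {n : ℕ} (S : Finset (Fin n)) :
    span ℂ (Set.range (blockedId n S)) = eSpan n S := by
  apply le_antisymm
  · rw [span_le]
    rintro v ⟨i, rfl⟩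
    rw [blockedId_row]
    by_cases hi : i ∈ S
    · simp [hi]
    · simp only [hi, if_false]
      exact subset_span ⟨i, hi, rfl⟩
  · rw [eSpan, span_le]
    rintro v ⟨i, hi, rfl⟩
    simp only [Set.mem_setOf_eq] at hi
    refine subset_span ⟨i, ?_⟩
    rw [blockedId_row]
    simp [hi]

lemma rank_stackTwo (n : ℕ) (A : Matrix (Fin n) (Fin n) ℝ) (lam : ℂ) (S : Finset (Fin n)) :
    (stackTwo n A lam S).rank =
      finrank ℂ ↥(span ℂ (Set.range (A.map Complex.ofReal - lam • (1 : Matrix (Fin n) (Fin n) ℂ)))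
        ⊔ eSpan n S) := by
  rw [Matrix.rank_eq_finrank_span_row]
  change finrank ℂ ↥(span ℂ (Set.range (stackTwo n A lam S))) = _
  rw [stackTwo, span_range_fromRows, span_range_blockedId]

lemma rank_stackThree (n r : ℕ) (A : Matrix (Fin n) (Fin n) ℝ) (lam : ℂ)
    (F : Matrix (Fin r) (Fin n) ℝ) (S : Finset (Fin n)) :
    (stackThree n r A lam F S).rank =
      finrank ℂ ↥(span ℂ (Set.range (A.map Complex.ofReal - lam • (1 : Matrix (Fin n) (Fin n) ℂ)))
        ⊔ eSpan n S ⊔ span ℂ (Set.range (F.map Complex.ofReal))) := by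
  rw [Matrix.rank_eq_finrank_span_row]
  change finrank ℂ ↥(span ℂ (Set.range (stackThree n r A lam F S))) = _
  rw [stackThree, span_range_fromRows, stackTwo,
    span_range_fromRows, span_range_blockedId]

lemma eSpan_empty (n : ℕ) : eSpan n (∅ : Finset (Fin n)) = ⊤ := by
  have h : Set.range (Pi.basisFun ℂ (Fin n)) ⊆
      ((fun i => (Pi.single i 1 : Fin n → ℂ)) '' {i | i ∉ (∅ : Finset (Fin n))}) := by
    rintro v ⟨i, rfl⟩
    exact ⟨i, by simp, by simp [Pi.basisFun_apply]⟩
  refine top_unique ?_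
  rw [← (Pi.basisFun ℂ (Fin n)).span_eq]
  exact span_mono h

lemma eSpan_erase {n : ℕ} (S : Finset (Fin n)) {s : Fin n} (hs : s ∈ S) :
    eSpan n (S.erase s) = eSpan n S ⊔ span ℂ {(Pi.single s 1 : Fin n → ℂ)} := by
  have hset : {i | i ∉ S.erase s} = {i | i ∉ S} ∪ {s} := by
    ext i
    simp only [Set.mem_setOf_eq, Finset.mem_erase, Set.mem_union, Set.mem_singleton_iff]
    constructor
    · intro h
      by_cases hi : i = s
      · exact Or.inr hi
      · exact Or.inl fun hS => h ⟨hi, hS⟩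
    · rintro (h | rfl)
      · exact fun hh => h hh.2
      · exact fun hh => hh.1 rfl
  rw [eSpan, eSpan, hset, Set.image_union, span_union, Set.image_singleton]

theorem minimum_blocking_set_ranks (n r : ℕ)
    (A : Matrix (Fin n) (Fin n) ℝ) (lam : ℂ) (F : Matrix (Fin r) (Fin n) ℝ)
    (Sstar : Finset (Fin n))
    (hfeas : (stackThree n r A lam F Sstar).rank > (stackTwo n A lam Sstar).rank)
    (hmin : ∀ S : Finset (Fin n),
      (stackThree n r A lam F S).rank > (stackTwo n A lam S).rank → Sstar.card ≤ S.card) :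
    (stackThree n r A lam F Sstar).rank = n ∧ (stackTwo n A lam Sstar).rank = n - 1 := by
  classical
  set R0 := span ℂ (Set.range (A.map Complex.ofReal - lam • (1 : Matrix (Fin n) (Fin n) ℂ)))
    with hR0
  set FR := span ℂ (Set.range (F.map Complex.ofReal)) with hFR
  set P := R0 ⊔ eSpan n Sstar with hP
  set Q := R0 ⊔ eSpan n Sstar ⊔ FR with hQ
  have hrank2 : (stackTwo n A lam Sstar).rank = finrank ℂ P := rank_stackTwo n A lam Sstar
  have hrank3 : (stackThree n r A lam F Sstar).rank = finrank ℂ Q :=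
    rank_stackThree n r A lam F Sstar
  have hne : Sstar.Nonempty := by
    rcases Finset.eq_empty_or_nonempty Sstar with h | h
    · exfalso
      subst h
      have h2 : P = ⊤ := by rw [hP, eSpan_empty]; simp
      have h3 : Q = ⊤ := by rw [hQ, eSpan_empty]; simp
      rw [hrank2, hrank3, h2, h3] at hfeas
      exact lt_irrefl _ hfeas
    · exact h
  obtain ⟨s0, hs0⟩ := hne
  have hcard_pos : 0 < Sstar.card := Finset.card_pos.mpr ⟨s0, hs0⟩
  have hrank2' : ∀ s ∈ Sstar, (stackTwo n A lam (Sstar.erase s)).rank =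
      finrank ℂ ↥(P ⊔ span ℂ {(Pi.single s 1 : Fin n → ℂ)}) := by
    intro s hs
    rw [rank_stackTwo, eSpan_erase _ hs]
    have h : R0 ⊔ (eSpan n Sstar ⊔ span ℂ {(Pi.single s 1 : Fin n → ℂ)}) =
        P ⊔ span ℂ {(Pi.single s 1 : Fin n → ℂ)} := by
      rw [hP, sup_assoc]
    rw [h]
  have hrank3' : ∀ s ∈ Sstar, (stackThree n r A lam F (Sstar.erase s)).rank =
      finrank ℂ ↥(Q ⊔ span ℂ {(Pi.single s 1 : Fin n → ℂ)}) := by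
    intro s hs
    rw [rank_stackThree, eSpan_erase _ hs]
    have h : R0 ⊔ (eSpan n Sstar ⊔ span ℂ {(Pi.single s 1 : Fin n → ℂ)}) ⊔ FR =
        Q ⊔ span ℂ {(Pi.single s 1 : Fin n → ℂ)} := by
      rw [hQ, ← sup_assoc, sup_right_comm]
    rw [h]
  have herase_lt : ∀ s ∈ Sstar, (Sstar.erase s).card < Sstar.card :=
    fun s hs => Finset.card_erase_lt_of_mem hs
  have hbound : ∀ (p : Submodule ℂ (Fin n → ℂ)) (v : Fin n → ℂ),
      finrank ℂ ↥(p ⊔ span ℂ {v}) ≤ finrank ℂ p + 1 := by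
    intro p v
    refine (Submodule.finrank_add_le_finrank_add_finrank p (span ℂ {v})).trans ?_
    have h1 : finrank ℂ ↥(span ℂ ({v} : Set (Fin n → ℂ))) ≤ 1 := by
      have := finrank_span_le_card (R := ℂ) ({v} : Set (Fin n → ℂ))
      simpa using this
    omega
  have hstep1 : finrank ℂ Q = finrank ℂ P + 1 := by
    by_contra hne2
    have hgt : finrank ℂ P + 1 < finrank ℂ Q := by
      rw [hrank2, hrank3] at hfeas
      omega
    have hfeas' : (stackThree n r A lam F (Sstar.erase s0)).rank >
        (stackTwo n A lam (Sstar.erase s0)).rank := by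
      rw [hrank2' s0 hs0, hrank3' s0 hs0]
      calc finrank ℂ ↥(P ⊔ span ℂ {(Pi.single s0 1 : Fin n → ℂ)}) ≤ finrank ℂ P + 1 :=
            hbound _ _
        _ < finrank ℂ Q := hgt
        _ ≤ finrank ℂ ↥(Q ⊔ span ℂ {(Pi.single s0 1 : Fin n → ℂ)}) :=
            Submodule.finrank_mono le_sup_left
    have h1 := hmin _ hfeas'
    have h2 := herase_lt s0 hs0
    omega
  have hQle : finrank ℂ Q ≤ n := by
    have h := Submodule.finrank_le Q
    simpa [Module.finrank_fintype_fun_eq_card] using h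
  have hstep2 : finrank ℂ Q = n := by
    by_contra hQn
    have hQlt : finrank ℂ Q < n := lt_of_le_of_ne hQle hQn
    have hexists : ∃ s ∈ Sstar, (Pi.single s 1 : Fin n → ℂ) ∉ Q := by
      by_contra hall
      push_neg at hall
      have hQtop : Q = ⊤ := by
        refine top_unique ?_
        rw [← (Pi.basisFun ℂ (Fin n)).span_eq, span_le]
        rintro v ⟨i, rfl⟩
        rw [Pi.basisFun_apply]
        by_cases hi : i ∈ Sstar
        · exact hall i hi
        · have hm : (Pi.single i 1 : Fin n → ℂ) ∈ eSpan n Sstar :=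
            subset_span ⟨i, hi, rfl⟩
          exact Submodule.mem_sup_left (Submodule.mem_sup_right hm)
      rw [hQtop] at hQlt
      simp [finrank_top, Module.finrank_fintype_fun_eq_card] at hQlt
    obtain ⟨s, hs, hsQ⟩ := hexists
    have hlt : Q < Q ⊔ span ℂ {(Pi.single s 1 : Fin n → ℂ)} := by
      refine lt_of_le_of_ne le_sup_left fun h => hsQ ?_
      rw [h]
      exact Submodule.mem_sup_right (mem_span_singleton_self _)
    have hfeas' : (stackThree n r A lam F (Sstar.erase s)).rank >
        (stackTwo n A lam (Sstar.erase s)).rank := by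
      rw [hrank2' s hs, hrank3' s hs]
      calc finrank ℂ ↥(P ⊔ span ℂ {(Pi.single s 1 : Fin n → ℂ)}) ≤ finrank ℂ P + 1 :=
            hbound _ _
        _ = finrank ℂ Q := hstep1.symm
        _ < finrank ℂ ↥(Q ⊔ span ℂ {(Pi.single s 1 : Fin n → ℂ)}) :=
            Submodule.finrank_lt_finrank_of_lt hlt
    have h1 := hmin _ hfeas'
    have h2 := herase_lt s hs
    omega
  refine ⟨by rw [hrank3, hstep2], ?_⟩
  rw [hrank2]
  omega
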